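/- For all x with 0 ≤ x ≤ 1, the binary entropy function satisfies h₂(x) = 1 - (1/(2 ln 2)) ∑_{k=1}^∞ (1-2x)^{2k}/(k(2k-1)). -/

import Mathlib

open Real Filter Finset Topology

lemma partial_sum_eq (n : ℕ) :
    ∑ k ∈ range n, 1 / (((k : ℝ) + 1) * (2 * ((k : ℝ) + 1) - 1))
      = 2 * (((harmonic (2 * n) : ℝ)) - (harmonic n : ℝ)) := by
  induction n with
  | zero => simp
  | succ n ih =>
    rw [Finset.sum_range_succ, ih]
    have h2n : 2 * (n + 1) = (2 * n) + 1 + 1 := by ring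
    rw [h2n, harmonic_succ, harmonic_succ, harmonic_succ]
    push_cast
    have h1 : ((n : ℝ) + 1) ≠ 0 := by positivity
    have h2 : (2 * (n : ℝ) + 1) ≠ 0 := by positivity
    have h3 : (2 * (n : ℝ) + 1 + 1) ≠ 0 := by positivity
    have key : (1:ℝ) / (((n:ℝ)+1) * (2*((n:ℝ)+1)-1))
        = 2 * ((2*(n:ℝ)+1)⁻¹ + (2*(n:ℝ)+1+1)⁻¹ - ((n:ℝ)+1)⁻¹) := by
      have h4 : 2*((n:ℝ)+1)-1 = 2*(n:ℝ)+1 := by ring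
      rw [h4]
      field_simp
      ring
    linarith [key]

lemma summable_aux : Summable (fun k : ℕ => 1 / (((k : ℝ) + 1) * (2 * ((k : ℝ) + 1) - 1))) := by
  have hs : Summable (fun k : ℕ => 1 / ((k : ℝ) + 1) ^ 2) := by
    have := Real.summable_one_div_nat_pow.mpr (le_refl 2)
    have := (summable_nat_add_iff 1).mpr this
    convert this using 2 with k
    · rfl
    push_cast
    ring
  apply Summable.of_nonneg_of_le (fun k => ?_) (fun k => ?_) hs
  · have hd : (0:ℝ) < ((k:ℝ)+1) * (2*((k:ℝ)+1)-1) := by nlinarith [Nat.cast_nonneg (α := ℝ) k]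
    positivity
  · have hk0 := Nat.cast_nonneg (α := ℝ) k
    have hd : (0:ℝ) < ((k:ℝ)+1) * (2*((k:ℝ)+1)-1) := by nlinarith
    rw [div_le_div_iff₀ hd (by positivity)]
    nlinarith

lemma hasSum_endpoint :
    HasSum (fun k : ℕ => 1 / (((k : ℝ) + 1) * (2 * ((k : ℝ) + 1) - 1))) (2 * Real.log 2) := by
  rw [summable_aux.hasSum_iff_tendsto_nat]
  have h1 : Tendsto (fun n : ℕ => (harmonic (2 * n) : ℝ) - Real.log (2 * n)) atTop
      (𝓝 eulerMascheroniConstant) := by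
    have hmul : Tendsto (fun n : ℕ => 2 * n) atTop atTop :=
      tendsto_atTop_atTop_of_monotone (fun a b h => by omega) (fun b => ⟨b, by omega⟩)
    have := Real.tendsto_harmonic_sub_log.comp hmul
    apply this.congr
    intro n
    simp only [Function.comp]
    push_cast
    ring_nf
  have h2 := Real.tendsto_harmonic_sub_log
  have h3 : Tendsto (fun n : ℕ => Real.log (2 * n) - Real.log n) atTop (𝓝 (Real.log 2)) := by
    have : ∀ᶠ n : ℕ in atTop, Real.log (2 * n) - Real.log n = Real.log 2 := by
      filter_upwards [eventually_gt_atTop 0] with n hn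
      rw [Real.log_mul two_ne_zero (by exact_mod_cast hn.ne' : ((n:ℝ) ≠ 0))]
      ring
    exact tendsto_const_nhds.congr' (Filter.EventuallyEq.symm this)
  have key : Tendsto (fun n : ℕ => 2 * (((harmonic (2 * n) : ℝ)) - (harmonic n : ℝ))) atTop
      (𝓝 (2 * Real.log 2)) := by
    have := ((h1.sub h2).add h3).const_mul (2 : ℝ)
    convert this using 2 with n
    · ring
    · ring
  exact key.congr (fun n => (partial_sum_eq n).symm)

lemma hasSum_open {t : ℝ} (ht : |t| < 1) :
    HasSum (fun k : ℕ => t ^ (2 * (k + 1)) / (((k : ℝ) + 1) * (2 * ((k : ℝ) + 1) - 1)))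
      ((1 + t) * Real.log (1 + t) + (1 - t) * Real.log (1 - t)) := by
  have ht2 : |t ^ 2| < 1 := by
    rw [abs_pow]
    nlinarith [abs_nonneg t]
  have hA := (Real.hasSum_log_sub_log_of_abs_lt_one ht).mul_left t
  have hB := Real.hasSum_pow_div_log_of_abs_lt_one ht2
  have hC := hA.sub hB
  have hfun : ∀ k : ℕ, t * (2 * (1 / (2 * (k:ℝ) + 1)) * t ^ (2 * k + 1)) - (t ^ 2) ^ (k + 1) / ((k:ℝ) + 1)
      = t ^ (2 * (k + 1)) / (((k : ℝ) + 1) * (2 * ((k : ℝ) + 1) - 1)) := by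
    intro k
    have h1 : ((k : ℝ) + 1) ≠ 0 := by positivity
    have h2 : (2 * (k : ℝ) + 1) ≠ 0 := by positivity
    have hp : (t ^ 2) ^ (k + 1) = t ^ (2 * (k + 1)) := by rw [← pow_mul]
    have hp2 : t * t ^ (2 * k + 1) = t ^ (2 * (k + 1)) := by
      rw [← pow_succ']
      ring_nf
    have hc : 2 * (1/(2*(k:ℝ)+1)) - 1/((k:ℝ)+1) = 1 / (((k:ℝ)+1)*(2*((k:ℝ)+1)-1)) := by
      have h4 : 2*((k:ℝ)+1)-1 = 2*(k:ℝ)+1 := by ring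
      rw [h4]
      field_simp
      ring
    have h5 : t * (2 * (1 / (2 * (k:ℝ) + 1)) * t ^ (2 * k + 1))
        = t ^ (2*(k+1)) * (2 * (1/(2*(k:ℝ)+1))) := by rw [← hp2]; ring
    rw [h5, hp, div_eq_mul_one_div (t^(2*(k+1))) ((((k:ℝ))+1)*(2*(((k:ℝ))+1)-1)), ← hc]
    ring
  have hval : t * (Real.log (1 + t) - Real.log (1 - t)) - (-Real.log (1 - t ^ 2))
      = (1 + t) * Real.log (1 + t) + (1 - t) * Real.log (1 - t) := by
    have h1 : (1 : ℝ) + t ≠ 0 := by cases abs_lt.mp ht; linarith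
    have h2 : (1 : ℝ) - t ≠ 0 := by cases abs_lt.mp ht; linarith
    rw [show (1 : ℝ) - t ^ 2 = (1 + t) * (1 - t) by ring, Real.log_mul h1 h2]
    ring
  rw [← hval]
  exact hC.congr_fun (fun k => (hfun k).symm)

noncomputable def h2 (x : ℝ) : ℝ := -(x * Real.logb 2 x) - (1 - x) * Real.logb 2 (1 - x)

theorem stmt_0 (x : ℝ) (hx0 : 0 ≤ x) (hx1 : x ≤ 1) :
    h2 x = 1 - (1 / (2 * Real.log 2)) *
      ∑' k : ℕ, (1 - 2 * x) ^ (2 * (k + 1)) / (((k : ℝ) + 1) * (2 * ((k : ℝ) + 1) - 1)) := by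
  have hlog2 : Real.log 2 ≠ 0 := ne_of_gt (Real.log_pos (by norm_num))
  rcases eq_or_lt_of_le hx0 with h0 | h0
  · -- x = 0
    subst h0
    have : (fun k : ℕ => ((1:ℝ) - 2 * 0) ^ (2 * (k + 1)) / (((k : ℝ) + 1) * (2 * ((k : ℝ) + 1) - 1)))
        = fun k : ℕ => 1 / (((k : ℝ) + 1) * (2 * ((k : ℝ) + 1) - 1)) := by
      funext k; norm_num
    rw [this, hasSum_endpoint.tsum_eq]
    simp [h2, Real.logb]
    field_simp
    ring
  rcases eq_or_lt_of_le hx1 with h1 | h1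
  · -- x = 1
    subst h1
    have : (fun k : ℕ => ((1:ℝ) - 2 * 1) ^ (2 * (k + 1)) / (((k : ℝ) + 1) * (2 * ((k : ℝ) + 1) - 1)))
        = fun k : ℕ => 1 / (((k : ℝ) + 1) * (2 * ((k : ℝ) + 1) - 1)) := by
      funext k
      norm_num
    rw [this, hasSum_endpoint.tsum_eq]
    simp [h2, Real.logb]
    field_simp
    ring
  · -- 0 < x < 1
    set t := 1 - 2 * x with htdef
    have ht : |t| < 1 := by rw [abs_lt]; constructor <;> [linarith; linarith]
    rw [(hasSum_open ht).tsum_eq]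
    have h1t : 1 + t = 2 * (1 - x) := by rw [htdef]; ring
    have h2t : 1 - t = 2 * x := by rw [htdef]; ring
    rw [h1t, h2t, Real.log_mul two_ne_zero (by linarith), Real.log_mul two_ne_zero (by linarith)]
    simp only [h2, Real.logb]
    field_simp
    ring
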